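/- arXiv:1910.07586 — 3 statements merged into one kernel-verified Lean document; each statement's English description precedes it below -/
import Mathlib

section
/- In a finite poset, the minimum number of chains needed to cover all elements equals the maximum size of an antichain (Dilworth's theorem). -/
open Classical in
/-- An antichain that is covered by chains injects into the set of chains. -/
private lemma antichain_card_le_chains {V : Type*} [PartialOrder V]
    (A : Finset V) (hA : IsAntichain (· < ·) (A : Set V))
    (C : Finset (Set V)) (hchain : ∀ c ∈ C, IsChain (· ≤ ·) c)
    (hcov : ∀ v ∈ A, ∃ c ∈ C, v ∈ c) : A.card ≤ C.card := by
  have hch : ∀ a : V, ∃ c : Set V, a ∈ A → c ∈ C ∧ a ∈ c := by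
    intro a
    by_cases ha : a ∈ A
    · obtain ⟨c, hc, hac⟩ := hcov a ha
      exact ⟨c, fun _ => ⟨hc, hac⟩⟩
    · exact ⟨∅, fun h => absurd h ha⟩
  choose g hg using hch
  refine Finset.card_le_card_of_injOn g (fun a ha => (hg a ha).1) ?_
  intro a ha b hb hab
  by_contra hne
  have hac : a ∈ g a := (hg a ha).2
  have hbc : b ∈ g a := hab ▸ (hg b hb).2
  rcases hchain (g a) ((hg a ha).1) hac hbc hne with h | h
  · exact hA ha hb hne (lt_of_le_of_ne h hne)
  · exact hA hb ha (Ne.symm hne) (lt_of_le_of_ne h (Ne.symm hne))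

/-- The maximum size of an antichain contained in a finset. -/
noncomputable def maxAC {V : Type*} [PartialOrder V] (S : Finset V) : ℕ :=
  sSup {n : ℕ | ∃ A : Finset V, A ⊆ S ∧ A.card = n ∧ IsAntichain (· < ·) (A : Set V)}

private lemma maxAC_set_nonempty {V : Type*} [PartialOrder V] (S : Finset V) :
    {n : ℕ | ∃ A : Finset V, A ⊆ S ∧ A.card = n ∧ IsAntichain (· < ·) (A : Set V)}.Nonempty :=
  ⟨0, ∅, by simp [IsAntichain, Set.Pairwise]⟩

private lemma maxAC_set_bdd {V : Type*} [PartialOrder V] (S : Finset V) :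
    BddAbove {n : ℕ | ∃ A : Finset V, A ⊆ S ∧ A.card = n ∧ IsAntichain (· < ·) (A : Set V)} := by
  refine ⟨S.card, fun n hn => ?_⟩
  obtain ⟨A, hAS, hcard, _⟩ := hn
  exact hcard ▸ Finset.card_le_card hAS

private lemma le_maxAC {V : Type*} [PartialOrder V] {S A : Finset V} (hAS : A ⊆ S)
    (hA : IsAntichain (· < ·) (A : Set V)) : A.card ≤ maxAC S :=
  le_csSup (maxAC_set_bdd S) ⟨A, hAS, rfl, hA⟩

private lemma exists_maxAC {V : Type*} [PartialOrder V] (S : Finset V) :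
    ∃ A : Finset V, A ⊆ S ∧ A.card = maxAC S ∧ IsAntichain (· < ·) (A : Set V) :=
  Nat.sSup_mem (maxAC_set_nonempty S) (maxAC_set_bdd S)

private lemma maxAC_mono {V : Type*} [PartialOrder V] {S T : Finset V} (h : S ⊆ T) :
    maxAC S ≤ maxAC T := by
  refine csSup_le (maxAC_set_nonempty S) ?_
  rintro n ⟨A, hAS, hcard, hA⟩
  exact hcard ▸ le_maxAC (hAS.trans h) hA

/-- Key lemma (Galvin's proof of Dilworth's theorem): every finset of a poset can be
covered by pairwise disjoint nonempty chains, at most `maxAC S` many. -/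
private lemma dilworth_key {V : Type*} [PartialOrder V] :
    ∀ (n : ℕ) (S : Finset V), S.card = n →
      ∃ C : Finset (Set V),
        (∀ c ∈ C, IsChain (· ≤ ·) c ∧ c.Nonempty ∧ c ⊆ (S : Set V)) ∧
        (∀ v ∈ S, ∃ c ∈ C, v ∈ c) ∧
        (∀ c ∈ C, ∀ d ∈ C, c ≠ d → Disjoint c d) ∧
        C.card ≤ maxAC S := by
  classical
  intro n
  induction n using Nat.strong_induction_on with
  | _ n IH =>
  intro S hScard
  rcases S.eq_empty_or_nonempty with rfl | hSne
  · exact ⟨∅, by simp, by simp, by simp, by simp⟩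
  -- pick a maximal element a of S
  obtain ⟨a, haS, hamax⟩ : ∃ a ∈ (S : Set V), ∀ a' ∈ (S : Set V), id a ≤ id a' → id a = id a' := by
    obtain ⟨a, ha, hm⟩ := (S : Set V).toFinite.exists_maximalFor id _
      (Finset.coe_nonempty.2 hSne)
    exact ⟨a, ha, fun b hb hab => le_antisymm hab (hm hb hab)⟩
  simp only [id] at hamax
  replace haS : a ∈ S := haS
  set S' := S.erase a with hS'
  have hS'sub : S' ⊆ S := Finset.erase_subset a S
  have haS' : a ∉ S' := Finset.notMem_erase a S
  have hS'card : S'.card < n := by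
    rw [← hScard, Finset.card_erase_of_mem haS]
    exact Nat.sub_lt (Finset.card_pos.2 hSne) one_pos
  obtain ⟨C', hC'chains, hC'cov, hC'disj, hC'card⟩ := IH S'.card hS'card S' rfl
  set k' := maxAC S' with hk'
  have hk'k : k' ≤ maxAC S := maxAC_mono hS'sub
  -- the singleton {a} is a legitimate extra chain
  have haA : IsAntichain (· < ·) (({a} : Finset V) : Set V) := by
    simp only [Finset.coe_singleton]
    exact Set.Subsingleton.isAntichain (Set.subsingleton_singleton) _
  rcases C'.eq_empty_or_nonempty with rfl | hC'ne
  · -- S' is empty, so S = {a}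
    have hS'empty : S' = ∅ := by
      by_contra h
      obtain ⟨v, hv⟩ := Finset.nonempty_of_ne_empty h
      obtain ⟨c, hc, -⟩ := hC'cov v hv
      exact absurd hc (Finset.notMem_empty c)
    refine ⟨{({a} : Set V)}, ?_, ?_, ?_, ?_⟩
    · intro c hc
      rw [Finset.mem_singleton] at hc
      subst hc
      exact ⟨Set.Subsingleton.isChain (Set.subsingleton_singleton),
        Set.singleton_nonempty a, by simpa using haS⟩
    · intro v hv
      have : v = a := by
        by_contra hne
        have hmem : v ∈ S' := Finset.mem_erase.2 ⟨hne, hv⟩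
        rw [hS'empty] at hmem
        exact absurd hmem (Finset.notMem_empty v)
      refine ⟨{a}, Finset.mem_singleton_self _, by simp [this]⟩
    · intro c hc d hd hne
      rw [Finset.mem_singleton] at hc hd
      exact absurd (hc.trans hd.symm) hne
    · have h1 : (1 : ℕ) ≤ maxAC S := by
        have := le_maxAC (Finset.singleton_subset_iff.2 haS) haA
        simpa using this
      simpa using h1
  -- now C' is nonempty, so V is nonempty
  have hVne : Nonempty V := by
    obtain ⟨c, hc⟩ := hC'ne
    obtain ⟨x, hx⟩ := (hC'chains c hc).2.1
    exact ⟨x⟩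
  -- C'.card = k'
  obtain ⟨B', hB'S, hB'card, hB'anti⟩ := exists_maxAC S'
  have hmk : C'.card = k' := by
    refine le_antisymm hC'card ?_
    rw [hk', ← hB'card]
    exact antichain_card_le_chains B' hB'anti C' (fun c hc => (hC'chains c hc).1)
      (fun v hv => hC'cov v (hB'S hv))
  -- every maximum antichain of S' meets every chain of C'
  have hmeet : ∀ c ∈ C', ∀ B : Finset V, B ⊆ S' → IsAntichain (· < ·) (B : Set V) →
      B.card = k' → ∃ b ∈ B, b ∈ c := by
    intro c hc B hBS hBanti hBcard
    by_contra hno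
    push_neg at hno
    have hle : B.card ≤ (C'.erase c).card := by
      refine antichain_card_le_chains B hBanti _
        (fun d hd => (hC'chains d (Finset.erase_subset c C' hd)).1) ?_
      intro v hv
      obtain ⟨d, hd, hvd⟩ := hC'cov v (hBS hv)
      refine ⟨d, Finset.mem_erase.2 ⟨?_, hd⟩, hvd⟩
      rintro rfl
      exact hno v hv hvd
    rw [Finset.card_erase_of_mem hc, hBcard, hmk] at hle
    have : 0 < C'.card := Finset.card_pos.2 ⟨c, hc⟩
    omega
  -- T c : elements of c belonging to some maximum antichain of S'
  set T : Set V → Set V := fun c =>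
    {x | x ∈ c ∧ ∃ B : Finset V, B ⊆ S' ∧ IsAntichain (· < ·) (B : Set V) ∧
      B.card = k' ∧ x ∈ B} with hT
  have hTmax : ∀ c : Set V, ∃ x : V, c ∈ C' → x ∈ T c ∧ ∀ y ∈ T c, y ≤ x := by
    intro c
    by_cases hc : c ∈ C'
    · have hTne : (T c).Nonempty := by
        obtain ⟨b, hbB, hbc⟩ := hmeet c hc B' hB'S hB'anti hB'card
        exact ⟨b, hbc, B', hB'S, hB'anti, hB'card, hbB⟩
      have hTfin : (T c).Finite := by
        refine Set.Finite.subset (S' : Set V).toFinite ?_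
        rintro x ⟨-, B, hBS, -, -, hxB⟩
        exact_mod_cast hBS hxB
      obtain ⟨x, hxT, hxmax⟩ : ∃ x ∈ T c, ∀ y ∈ T c, id x ≤ id y → id x = id y := by
        obtain ⟨x, hx, hm⟩ := hTfin.exists_maximalFor id _ hTne
        exact ⟨x, hx, fun b hb hab => le_antisymm hab (hm hb hab)⟩
      simp only [id] at hxmax
      refine ⟨x, fun _ => ⟨hxT, ?_⟩⟩
      intro y hyT
      rcases eq_or_ne x y with rfl | hne
      · exact le_refl x
      rcases (hC'chains c hc).1 hxT.1 hyT.1 hne with h | h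
      · exact (hxmax y hyT h).ge
      · exact h
    · exact ⟨Classical.arbitrary V, fun h => absurd h hc⟩
  choose f hf using hTmax
  -- facts about f
  have hfc : ∀ c ∈ C', f c ∈ c := fun c hc => ((hf c hc).1).1
  have hfS' : ∀ c ∈ C', f c ∈ S' := by
    intro c hc
    have := (hC'chains c hc).2.2 (hfc c hc)
    exact_mod_cast this
  have hfinj : Set.InjOn f (C' : Set (Set V)) := by
    intro c hc d hd hfe
    by_contra hne
    have h1 : f c ∈ c := hfc c hc
    have h2 : f c ∈ d := hfe ▸ hfc d hd
    exact Set.disjoint_left.1 (hC'disj c hc d hd hne) h1 h2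
  -- the f-image is an antichain
  have hAanti : IsAntichain (· < ·) ((C'.image f : Finset V) : Set V) := by
    intro x hx y hy hne hlt
    simp only [Finset.coe_image, Set.mem_image, Finset.mem_coe] at hx hy
    obtain ⟨c, hc, rfl⟩ := hx
    obtain ⟨d, hd, rfl⟩ := hy
    obtain ⟨-, B, hBS, hBanti, hBcard, hfdB⟩ := (hf d hd).1
    obtain ⟨b, hbB, hbc⟩ := hmeet c hc B hBS hBanti hBcard
    have hbT : b ∈ T c := ⟨hbc, B, hBS, hBanti, hBcard, hbB⟩
    have hble : b ≤ f c := (hf c hc).2 b hbT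
    have hblt : b < f d := lt_of_le_of_lt hble hlt
    exact hBanti hbB hfdB (ne_of_lt hblt) hblt
  by_cases hcase : ∃ c ∈ C', f c ≤ a
  · -- Case 1: remove the chain K = {a} ∪ {x ∈ c₀ | x ≤ f c₀}
    obtain ⟨c₀, hc₀, hfa⟩ := hcase
    set K : Set V := insert a {x | x ∈ c₀ ∧ x ≤ f c₀} with hK
    have hKchain : IsChain (· ≤ ·) K := by
      intro x hx y hy hne
      rcases hx with rfl | ⟨hxc, hxle⟩
      · rcases hy with rfl | ⟨hyc, hyle⟩
        · exact absurd rfl hne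
        · exact Or.inr (hyle.trans hfa)
      · rcases hy with rfl | ⟨hyc, hyle⟩
        · exact Or.inl (hxle.trans hfa)
        · exact (hC'chains c₀ hc₀).1 hxc hyc hne
    have hKS : K ⊆ (S : Set V) := by
      rintro x (rfl | ⟨hxc, -⟩)
      · exact_mod_cast haS
      · exact_mod_cast hS'sub (by exact_mod_cast (hC'chains c₀ hc₀).2.2 hxc)
    have haK : a ∈ K := Set.mem_insert a _
    set S₂ := S.filter (fun v => v ∉ K) with hS₂
    have hS₂S : S₂ ⊆ S := Finset.filter_subset _ S
    have hS₂S' : S₂ ⊆ S' := by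
      intro v hv
      rw [hS₂, Finset.mem_filter] at hv
      refine Finset.mem_erase.2 ⟨?_, hv.1⟩
      rintro rfl
      exact hv.2 haK
    have hS₂card : S₂.card < n := by
      have : S₂ ⊂ S := Finset.ssubset_iff_of_subset hS₂S |>.2
        ⟨a, haS, by simp [hS₂, haK]⟩
      calc S₂.card < S.card := Finset.card_lt_card this
        _ = n := hScard
    obtain ⟨C'', hC''chains, hC''cov, hC''disj, hC''card⟩ := IH S₂.card hS₂card S₂ rfl
    -- maxAC S₂ < k'
    have hS₂lt : maxAC S₂ < k' := by
      by_contra hge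
      push_neg at hge
      obtain ⟨B₂, hB₂S, hB₂card, hB₂anti⟩ := exists_maxAC S₂
      obtain ⟨B₃, hB₃sub, hB₃card⟩ := Finset.exists_subset_card_eq (s := B₂) (n := k') (hB₂card ▸ hge)
      have hB₃anti : IsAntichain (· < ·) (B₃ : Set V) :=
        hB₂anti.subset (by exact_mod_cast hB₃sub)
      obtain ⟨b, hbB, hbc⟩ := hmeet c₀ hc₀ B₃ ((hB₃sub.trans hB₂S).trans hS₂S') hB₃anti hB₃card
      have hbT : b ∈ T c₀ := ⟨hbc, B₃, (hB₃sub.trans hB₂S).trans hS₂S', hB₃anti, hB₃card, hbB⟩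
      have hbK : b ∈ K := Set.mem_insert_iff.2 (Or.inr ⟨hbc, (hf c₀ hc₀).2 b hbT⟩)
      have : b ∈ S₂ := hB₂S (hB₃sub hbB)
      rw [hS₂, Finset.mem_filter] at this
      exact this.2 hbK
    have hKnotmem : K ∉ C'' := by
      intro h
      have := (hC''chains K h).2.2 haK
      rw [Finset.coe_filter] at this
      exact this.2 haK
    refine ⟨insert K C'', ?_, ?_, ?_, ?_⟩
    · intro c hc
      rcases Finset.mem_insert.1 hc with rfl | hc
      · exact ⟨hKchain, ⟨a, haK⟩, hKS⟩
      · exact ⟨(hC''chains c hc).1, (hC''chains c hc).2.1,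
          ((hC''chains c hc).2.2).trans (by exact_mod_cast hS₂S)⟩
    · intro v hv
      by_cases hvK : v ∈ K
      · exact ⟨K, Finset.mem_insert_self _ _, hvK⟩
      · obtain ⟨c, hc, hvc⟩ := hC''cov v (Finset.mem_filter.2 ⟨hv, hvK⟩)
        exact ⟨c, Finset.mem_insert_of_mem hc, hvc⟩
    · intro c hc d hd hne
      have hdisjK : ∀ e ∈ C'', Disjoint K e := by
        intro e he
        rw [Set.disjoint_left]
        intro x hxK hxe
        have := (hC''chains e he).2.2 hxe
        rw [Finset.coe_filter] at this
        exact this.2 hxK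
      rcases Finset.mem_insert.1 hc with rfl | hc
      · rcases Finset.mem_insert.1 hd with rfl | hd
        · exact absurd rfl hne
        · exact hdisjK d hd
      · rcases Finset.mem_insert.1 hd with rfl | hd
        · exact (hdisjK c hc).symm
        · exact hC''disj c hc d hd hne
    · rw [Finset.card_insert_of_notMem hKnotmem]
      have : C''.card + 1 ≤ k' := by omega
      exact this.trans hk'k
  · -- Case 2: a is incomparable to every f c; add the chain {a}
    push_neg at hcase
    have hanotim : a ∉ C'.image f := by
      intro h
      obtain ⟨c, hc, hfc'⟩ := Finset.mem_image.1 h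
      exact haS' (hfc' ▸ hfS' c hc)
    have hA2anti : IsAntichain (· < ·) ((insert a (C'.image f) : Finset V) : Set V) := by
      intro x hx y hy hne hlt
      simp only [Finset.coe_insert, Set.mem_insert_iff, Finset.mem_coe] at hx hy
      rcases hx with rfl | hx
      · rcases hy with rfl | hy
        · exact hne rfl
        · obtain ⟨c, hc, rfl⟩ := Finset.mem_image.1 hy
          have : f c ∈ S := hS'sub (hfS' c hc)
          exact hne (hamax (f c) (by exact_mod_cast this) hlt.le)
      · rcases hy with rfl | hy
        · obtain ⟨c, hc, rfl⟩ := Finset.mem_image.1 hx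
          exact hcase c hc hlt.le
        · exact hAanti (by exact_mod_cast hx) (by exact_mod_cast hy) hne hlt
    have hA2S : insert a (C'.image f) ⊆ S := by
      intro x hx
      rcases Finset.mem_insert.1 hx with rfl | hx
      · exact haS
      · obtain ⟨c, hc, rfl⟩ := Finset.mem_image.1 hx
        exact hS'sub (hfS' c hc)
    have hcardA2 : (insert a (C'.image f)).card = C'.card + 1 := by
      rw [Finset.card_insert_of_notMem hanotim, Finset.card_image_of_injOn hfinj]
    have hbound : C'.card + 1 ≤ maxAC S := hcardA2 ▸ le_maxAC hA2S hA2anti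
    have hanotC : ({a} : Set V) ∉ C' := by
      intro h
      have := (hC'chains _ h).2.2 (Set.mem_singleton a)
      exact haS' (by exact_mod_cast this)
    refine ⟨insert ({a} : Set V) C', ?_, ?_, ?_, ?_⟩
    · intro c hc
      rcases Finset.mem_insert.1 hc with rfl | hc
      · exact ⟨Set.Subsingleton.isChain Set.subsingleton_singleton,
          Set.singleton_nonempty a, by simpa using haS⟩
      · exact ⟨(hC'chains c hc).1, (hC'chains c hc).2.1,
          ((hC'chains c hc).2.2).trans (by exact_mod_cast hS'sub)⟩
    · intro v hv
      rcases eq_or_ne v a with rfl | hne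
      · exact ⟨{v}, Finset.mem_insert_self _ _, Set.mem_singleton v⟩
      · obtain ⟨c, hc, hvc⟩ := hC'cov v (Finset.mem_erase.2 ⟨hne, hv⟩)
        exact ⟨c, Finset.mem_insert_of_mem hc, hvc⟩
    · intro c hc d hd hne
      have hdisja : ∀ e ∈ C', Disjoint ({a} : Set V) e := by
        intro e he
        rw [Set.disjoint_left]
        rintro x rfl hxe
        exact haS' (by exact_mod_cast (hC'chains e he).2.2 hxe)
      rcases Finset.mem_insert.1 hc with rfl | hc
      · rcases Finset.mem_insert.1 hd with rfl | hd
        · exact absurd rfl hne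
        · exact hdisja d hd
      · rcases Finset.mem_insert.1 hd with rfl | hd
        · exact (hdisja c hc).symm
        · exact hC'disj c hc d hd hne
    · rw [Finset.card_insert_of_notMem hanotC]
      exact hbound

/-- Dilworth's theorem: in a finite poset, the minimum number of chains needed to
cover all elements equals the maximum size of an antichain. -/
theorem dilworth (V : Type*) [Fintype V] [PartialOrder V] :
    sInf {n : ℕ | ∃ C : Finset (Set V),
        C.card = n ∧ (∀ c ∈ C, IsChain (· ≤ ·) c) ∧ ∀ v : V, ∃ c ∈ C, v ∈ c}
      = sSup {n : ℕ | ∃ A : Finset V,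
        A.card = n ∧ IsAntichain (· < ·) (A : Set V)} := by
  set TS := {n : ℕ | ∃ C : Finset (Set V),
      C.card = n ∧ (∀ c ∈ C, IsChain (· ≤ ·) c) ∧ ∀ v : V, ∃ c ∈ C, v ∈ c} with hTS
  set AS := {n : ℕ | ∃ A : Finset V,
      A.card = n ∧ IsAntichain (· < ·) (A : Set V)} with hAS
  have hAS_eq : AS = {n : ℕ | ∃ A : Finset V, A ⊆ Finset.univ ∧ A.card = n ∧
      IsAntichain (· < ·) (A : Set V)} := by
    ext n
    simp [hAS, Finset.subset_univ]
  have hASmax : sSup AS = maxAC (Finset.univ : Finset V) := by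
    rw [hAS_eq]; rfl
  -- upper bound: there is a cover of size ≤ maxAC univ
  have hTSne : TS.Nonempty := by
    obtain ⟨C, hCchains, hCcov, _, hCcard⟩ := dilworth_key (Finset.univ : Finset V).card
      Finset.univ rfl
    exact ⟨C.card, C, rfl, fun c hc => (hCchains c hc).1,
      fun v => hCcov v (Finset.mem_univ v)⟩
  have h1 : sInf TS ≤ sSup AS := by
    obtain ⟨C, hCchains, hCcov, _, hCcard⟩ := dilworth_key (Finset.univ : Finset V).card
      Finset.univ rfl
    have hmem : C.card ∈ TS := ⟨C, rfl, fun c hc => (hCchains c hc).1,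
      fun v => hCcov v (Finset.mem_univ v)⟩
    calc sInf TS ≤ C.card := Nat.sInf_le hmem
      _ ≤ maxAC (Finset.univ : Finset V) := hCcard
      _ = sSup AS := hASmax.symm
  have h2 : sSup AS ≤ sInf TS := by
    have hASne : AS.Nonempty := ⟨0, ∅, by simp [IsAntichain, Set.Pairwise]⟩
    obtain ⟨C, hCcard, hCchains, hCcov⟩ := Nat.sInf_mem hTSne
    refine csSup_le hASne ?_
    rintro m ⟨A, hAcard, hAanti⟩
    calc m = A.card := hAcard.symm
      _ ≤ C.card := antichain_card_le_chains A hAanti C hCchains (fun v _ => hCcov v)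
      _ = sInf TS := hCcard
  exact le_antisymm h1 h2
end

section
/- Let G be the bipartite graph associated with a finite poset (V, ≺), with vertex classes V⁻ and V⁺ (two copies of V) and an edge (v⁻, u⁺) whenever v ≺ u. If M is a matching in G, then the edges of M, viewed as the relations {(v,u) : (v⁻,u⁺) ∈ M} on V, decompose V into a collection of at most |V| − |M| vertex-disjoint chains covering V. -/
/-- A matching in the bipartite comparability graph of a finite poset (edges (v⁻,u⁺)
for v < u) decomposes V into at most |V| - |M| vertex-disjoint chains covering V. -/
theorem matching_gives_chain_cover (V : Type*) [Fintype V] [PartialOrder V]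
    [DecidableEq V] (M : Finset (V × V))
    (hedge : ∀ p ∈ M, p.1 < p.2)
    (hout : ∀ v u u', (v, u) ∈ M → (v, u') ∈ M → u = u')
    (hin : ∀ v v' u, (v, u) ∈ M → (v', u) ∈ M → v = v') :
    ∃ C : Finset (Set V),
      C.card ≤ Fintype.card V - M.card ∧
      (∀ c ∈ C, IsChain (· ≤ ·) c) ∧
      (∀ v : V, ∃ c ∈ C, v ∈ c) ∧
      ((C : Set (Set V)).PairwiseDisjoint id) ∧
      (∀ p ∈ M, ∃ c ∈ C, p.1 ∈ c ∧ p.2 ∈ c) := by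
  classical
  set n := Fintype.card V with hn
  -- successor / predecessor partial functions from the matching
  let step : V → V := fun v => if h : ∃ u, (v, u) ∈ M then h.choose else v
  let prev : V → V := fun u => if h : ∃ v, (v, u) ∈ M then h.choose else u
  have step_spec : ∀ v u, (v, u) ∈ M → step v = u := by
    intro v u hvu
    have h : ∃ u, (v, u) ∈ M := ⟨u, hvu⟩
    show (if h : ∃ u, (v, u) ∈ M then h.choose else v) = u
    rw [dif_pos h]
    exact hout v _ u h.choose_spec hvu
  have prev_spec : ∀ v u, (v, u) ∈ M → prev u = v := by
    intro v u hvu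
    have h : ∃ v, (v, u) ∈ M := ⟨v, hvu⟩
    show (if h : ∃ v, (v, u) ∈ M then h.choose else u) = v
    rw [dif_pos h]
    exact hin _ v u h.choose_spec hvu
  have le_step : ∀ v, v ≤ step v := by
    intro v
    show v ≤ (if h : ∃ u, (v, u) ∈ M then h.choose else v)
    by_cases h : ∃ u, (v, u) ∈ M
    · rw [dif_pos h]; exact (hedge _ h.choose_spec).le
    · rw [dif_neg h]
  have prev_ne_mem : ∀ u, prev u ≠ u → (prev u, u) ∈ M := by
    intro u h
    by_cases hh : ∃ v, (v, u) ∈ M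
    · have : prev u = hh.choose := by
        show (if h : ∃ v, (v, u) ∈ M then h.choose else u) = hh.choose
        rw [dif_pos hh]
      rw [this]; exact hh.choose_spec
    · exfalso; apply h
      show (if h : ∃ v, (v, u) ∈ M then h.choose else u) = u
      rw [dif_neg hh]
  have prev_le : ∀ u, prev u ≤ u := by
    intro u
    by_cases h : prev u = u
    · exact h.le
    · exact (hedge _ (prev_ne_mem u h)).le
  -- once a prev-fixed point, always fixed
  -- key: prev^[n] x is a fixed point of prev
  have fixA : ∀ x, prev (prev^[n] x) = prev^[n] x := by
    intro x
    by_contra hfix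
    have hforall : ∀ i ≤ n, prev (prev^[i] x) ≠ prev^[i] x := by
      intro i hi h
      apply hfix
      have heq : prev^[n] x = prev^[i] x := by
        rw [← Nat.sub_add_cancel hi, Function.iterate_add_apply]
        exact Function.iterate_fixed h _
      rw [heq, h]
    have key : ∀ j, j ≤ n → ∀ i, i < j → prev^[j] x < prev^[i] x := by
      intro j
      induction j with
      | zero => intro _ i hi; omega
      | succ j ih =>
        intro hj i hi
        have hlt : prev^[j+1] x < prev^[j] x := by
          rw [Function.iterate_succ_apply']
          exact lt_of_le_of_ne (prev_le _) (hforall j (by omega))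
        rcases Nat.lt_succ_iff_lt_or_eq.mp hi with h | h
        · exact hlt.trans (ih (by omega) i h)
        · rw [h]; exact hlt
    have ginj : Function.Injective (fun i : Fin (n+1) => prev^[i.1] x) := by
      intro i j hij
      by_contra hne
      rcases lt_or_gt_of_ne (fun h : i.1 = j.1 => hne (Fin.ext h)) with h | h
      · exact absurd hij.symm (key j.1 (by omega) i.1 h).ne
      · exact absurd hij (key i.1 (by omega) j.1 h).ne
    have := Fintype.card_le_of_injective _ ginj
    simp [← hn] at this
  let bot : V → V := fun x => prev^[n] x
  have bot_exists : ∀ x, ∃ k, prev (prev^[k] x) = prev^[k] x := fun x => ⟨n, fixA x⟩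
  -- every point is reached from its bottom by iterating step
  have reachAux : ∀ (x : V) (m : ℕ), (∀ i < m, prev (prev^[i] x) ≠ prev^[i] x) →
      step^[m] (prev^[m] x) = x := by
    intro x m
    induction m with
    | zero => intro _; rfl
    | succ m ih =>
      intro h
      have hne : prev (prev^[m] x) ≠ prev^[m] x := h m (by omega)
      have hmem : (prev (prev^[m] x), prev^[m] x) ∈ M := prev_ne_mem _ hne
      have hstep : step (prev (prev^[m] x)) = prev^[m] x := step_spec _ _ hmem
      rw [Function.iterate_succ_apply, Function.iterate_succ_apply' (f := prev),
        hstep]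
      exact ih (fun i hi => h i (by omega))
  have reach : ∀ x, ∃ k, step^[k] (bot x) = x := by
    intro x
    have hex := bot_exists x
    set k := Nat.find hex with hkdef
    have hk : prev (prev^[k] x) = prev^[k] x := Nat.find_spec hex
    have hkn : k ≤ n := Nat.find_le (fixA x)
    have hbot : bot x = prev^[k] x := by
      show prev^[n] x = prev^[k] x
      rw [← Nat.sub_add_cancel hkn, Function.iterate_add_apply]
      exact Function.iterate_fixed hk _
    refine ⟨k, ?_⟩
    rw [hbot]
    exact reachAux x k (fun i hi => Nat.find_min hex hi)
  have up : ∀ (k : ℕ) (x : V), x ≤ step^[k] x := by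
    intro k x
    induction k with
    | zero => rfl
    | succ k ih =>
      rw [Function.iterate_succ_apply']
      exact ih.trans (le_step _)
  -- comparability within a fiber of bot
  have comp : ∀ a b, bot a = bot b → a ≤ b ∨ b ≤ a := by
    intro a b hab
    obtain ⟨ka, ha⟩ := reach a
    obtain ⟨kb, hb⟩ := reach b
    rcases le_total ka kb with h | h
    · left
      have : b = step^[kb - ka] a := by
        rw [← ha, ← Function.iterate_add_apply, Nat.sub_add_cancel h, hab, hb]
      rw [this]; exact up _ _
    · right
      have : a = step^[ka - kb] b := by
        rw [← hb, ← Function.iterate_add_apply, Nat.sub_add_cancel h, ← hab, ha]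
      rw [this]; exact up _ _
  -- matched pairs share a bottom
  have bot_edge : ∀ v u, (v, u) ∈ M → bot u = bot v := by
    intro v u h
    have h1 : prev^[n+1] u = prev^[n] v := by
      rw [Function.iterate_succ_apply, prev_spec v u h]
    have h2 : prev^[n+1] u = prev^[n] u := by
      rw [Function.iterate_succ_apply']
      exact fixA u
    show prev^[n] u = prev^[n] v
    rw [← h2, h1]
  refine ⟨(Finset.univ.image bot).image (fun b => {u : V | bot u = b}),
    ?_, ?_, ?_, ?_, ?_⟩
  · -- cardinality
    have h1 : ((Finset.univ.image bot).image
        (fun b => {u : V | bot u = b})).card ≤ (Finset.univ.image bot).card :=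
      Finset.card_image_le
    have h2 : Finset.univ.image bot ⊆ (M.image Prod.snd)ᶜ := by
      intro b hb
      rw [Finset.mem_compl]
      intro hmem
      obtain ⟨p, hp, hpb⟩ := Finset.mem_image.mp hmem
      obtain ⟨x, _, hx⟩ := Finset.mem_image.mp hb
      have hfix : prev b = b := by rw [← hx]; exact fixA x
      have : prev b = p.1 := prev_spec p.1 b (by rw [← hpb]; exact hp)
      have hlt : p.1 < b := by
        have := hedge p hp; rw [hpb] at this; exact this
      rw [hfix] at this
      exact absurd this hlt.ne'
    have h3 : (M.image Prod.snd).card = M.card := by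
      apply Finset.card_image_of_injOn
      intro p hp q hq hpq
      have : p.1 = q.1 := hin p.1 q.1 p.2 hp (by rw [hpq]; exact hq)
      exact Prod.ext this hpq
    calc ((Finset.univ.image bot).image (fun b => {u : V | bot u = b})).card
        ≤ (Finset.univ.image bot).card := h1
      _ ≤ ((M.image Prod.snd)ᶜ).card := Finset.card_le_card h2
      _ = n - M.card := by rw [Finset.card_compl, h3]
  · -- chains
    intro c hc
    obtain ⟨b, _, hb⟩ := Finset.mem_image.mp hc
    intro x hx y hy _
    rw [← hb] at hx hy
    exact comp x y (by rw [Set.mem_setOf_eq] at hx hy; rw [hx, hy])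
  · -- cover
    intro v
    refine ⟨{u : V | bot u = bot v}, ?_, rfl⟩
    exact Finset.mem_image_of_mem _ (Finset.mem_image_of_mem _ (Finset.mem_univ v))
  · -- pairwise disjoint
    intro c₁ h₁ c₂ h₂ hne
    obtain ⟨b₁, _, hb₁⟩ := Finset.mem_image.mp (Finset.mem_coe.mp h₁)
    obtain ⟨b₂, _, hb₂⟩ := Finset.mem_image.mp (Finset.mem_coe.mp h₂)
    have hbne : b₁ ≠ b₂ := by
      intro h
      exact hne (by rw [← hb₁, ← hb₂, h])
    simp only [id, Function.onFun]
    rw [Set.disjoint_left]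
    intro x hx hx'
    rw [← hb₁] at hx
    rw [← hb₂] at hx'
    exact hbne (hx.symm.trans hx')
  · -- matched pairs in a common chain
    intro p hp
    refine ⟨{u : V | bot u = bot p.1}, ?_, rfl, bot_edge p.1 p.2 hp⟩
    exact Finset.mem_image_of_mem _ (Finset.mem_image_of_mem _ (Finset.mem_univ p.1))
end

section
/- Let M be a maximum matching in the bipartite graph G of a finite poset (V, ≺), let Q be the set of unmatched vertices of V⁻, and let S be the set of vertices reachable from Q by alternating paths (paths alternating between non-matching and matching edges, starting with a non-matching edge). Then A = {v ∈ V : v⁻ ∈ S and v⁺ ∉ S} is an antichain. -/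
/-- A matching in the bipartite comparability graph of a poset. -/
def IsPosetMatching {V : Type*} [PartialOrder V] (M : Finset (V × V)) : Prop :=
  (∀ p ∈ M, p.1 < p.2) ∧
  (∀ v u u', (v, u) ∈ M → (v, u') ∈ M → u = u') ∧
  (∀ v v' u, (v, u) ∈ M → (v', u) ∈ M → v = v')

/-- Vertices of the bipartite graph `V⁻ ⊕ V⁺` reachable by an alternating path
starting at an unmatched vertex of `V⁻` (first edge non-matching, then edges
alternate matched/unmatched).  `Sum.inl v` stands for `v⁻`, `Sum.inr u` for `u⁺`. -/
inductive AltReach {V : Type*} [PartialOrder V] (M : Finset (V × V)) : V ⊕ V → Prop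
  | base (v : V) (hv : ∀ u, (v, u) ∉ M) : AltReach M (Sum.inl v)
  | stepUnmatched (v u : V) (h : AltReach M (Sum.inl v)) (hlt : v < u)
      (hnm : (v, u) ∉ M) : AltReach M (Sum.inr u)
  | stepMatched (v u : V) (h : AltReach M (Sum.inr u)) (hm : (v, u) ∈ M) :
      AltReach M (Sum.inl v)

/-- If M is a maximum matching and S the set of vertices reachable by alternating
paths from unmatched vertices of V⁻, then
A = {v : v⁻ ∈ S and v⁺ ∉ S} is an antichain. -/
theorem altReach_antichain (V : Type*) [Fintype V] [PartialOrder V]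
    (M : Finset (V × V)) (hM : IsPosetMatching M)
    (hmax : ∀ M' : Finset (V × V), IsPosetMatching M' → M'.card ≤ M.card) :
    IsAntichain (· < ·)
      {v : V | AltReach M (Sum.inl v) ∧ ¬ AltReach M (Sum.inr v)} := by
  rintro v ⟨hv, hv'⟩ w ⟨hw, hw'⟩ hne hlt
  by_cases hm : (v, w) ∈ M
  · cases hv with
    | base _ h => exact h w hm
    | stepMatched _ u h hmu =>
        exact hw' (hM.2.1 v u w hmu hm ▸ h)
  · exact hw' (AltReach.stepUnmatched v w hv hlt hm)
end
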